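/- arXiv:2508.12924 — 2 statements merged into one kernel-verified Lean document; each statement's English description precedes it below -/
import Mathlib

section
/- For every n ≥ 1, the number of equivalence classes of primitive binary strings of length n under the combined action of cyclic shifts and inversion equals γₙ = (1/(2n))·Σ_{m | n, m odd} μ(m)·2^{n/m}, where μ is the Möbius function. Equivalently, 2n·|N̄(n)| = Σ_{m | n, m odd} μ(m)·2^{n/m}. -/
open Finset

namespace Necklaces

variable {n : ℕ}

/-- The cyclic left shift `L` on binary strings of length `n`. -/
def shiftL (s : Fin n → Bool) : Fin n → Bool :=
  fun i => s ⟨(i.val + 1) % n, Nat.mod_lt _ (Nat.lt_of_le_of_lt (Nat.zero_le _) i.isLt)⟩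

/-- Digitwise inversion (complement) `ι`. -/
def inv (s : Fin n → Bool) : Fin n → Bool := fun i => !(s i)

/-- A string is primitive if no nontrivial cyclic shift fixes it. -/
def Primitive (s : Fin n → Bool) : Prop :=
  ∀ k : ℕ, 0 < k → k < n → shiftL^[k] s ≠ s

/-- The necklace `⟨s⟩`: the orbit of `s` under cyclic shifts. -/
def necklace (s : Fin n → Bool) : Set (Fin n → Bool) :=
  {t | ∃ k : ℕ, t = shiftL^[k] s}

/-- The necklace inversion class `[s]`: the orbit of `s` under cyclic shifts and inversion. -/
def invClass (s : Fin n → Bool) : Set (Fin n → Bool) :=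
  {t | ∃ k : ℕ, t = shiftL^[k] s ∨ t = inv (shiftL^[k] s)}

/-- The number of 1's in `s`. -/
def onesCard (s : Fin n → Bool) : ℕ := (univ.filter (fun i => s i = true)).card

/-- The mod-2 partial sum map `Ξ`: the `i`-th digit of `Ξ(s)` is `s₁+⋯+sᵢ (mod 2)`. -/
def xi (s : Fin n → Bool) : Fin n → Bool :=
  fun i => decide (Odd ((Finset.Iic i).filter (fun j => s j = true)).card)

/-- `ι(s)` is a cyclic shift of `s`. -/
def ReflexiveStr (s : Fin n → Bool) : Prop := ∃ k : ℕ, shiftL^[k] s = inv s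

/-- `s` consists of two copies of a primitive string of length `n/2`
with an odd number of 1's. -/
def TwoCopies (s : Fin n → Bool) : Prop :=
  n % 2 = 0 ∧ shiftL^[n / 2] s = s ∧ (∀ k : ℕ, 0 < k → k < n / 2 → shiftL^[k] s ≠ s) ∧
    Odd ((univ.filter (fun i : Fin n => i.val < n / 2 ∧ s i = true)).card)

/-- `s` generates a necklace belonging to `Ñ⁺(n)`. -/
def GoodPlus (s : Fin n → Bool) : Prop :=
  (Primitive s ∧ Even (onesCard s)) ∨ TwoCopies s

/-- The set `Ñ⁺(n)` of necklaces. -/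
def NtildePlus (n : ℕ) : Set (Set (Fin n → Bool)) :=
  {N | ∃ s : Fin n → Bool, GoodPlus s ∧ N = necklace s}

/-- The set `N̄(n)` of necklace inversion classes of primitive strings. -/
def Nbar (n : ℕ) : Set (Set (Fin n → Bool)) :=
  {C | ∃ s : Fin n → Bool, Primitive s ∧ C = invClass s}

/-- Lexicographic order on strings, with `0 < 1` and the leftmost digit most significant. -/
def strLt (s t : Fin n → Bool) : Prop :=
  ∃ i : Fin n, (∀ j : Fin n, j < i → s j = t j) ∧ s i < t i

/-- Extended lexicographic order on extended strings `s^b`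
(`b = false` encodes `−`, `b = true` encodes `+`). -/
def extLt (p q : (Fin n → Bool) × Bool) : Prop :=
  strLt p.1 q.1 ∨ (p.1 = q.1 ∧ p.2 < q.2)

/-- The twisted shift operator `F`. -/
def twistF (s : Fin n → Bool) : Fin n → Bool :=
  if h : 0 < n then
    (if shiftL s ⟨0, h⟩ = true then shiftL s else inv (shiftL s))
  else s

/-- The extended twisted shift operator `F̃`. -/
def extF (p : (Fin n → Bool) × Bool) : (Fin n → Bool) × Bool :=
  if h : 0 < n then
    (if twistF p.1 ⟨n - 1, Nat.sub_lt h Nat.one_pos⟩ = true then (twistF p.1, p.2)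
     else (twistF p.1, !p.2))
  else p

/-- Cyclic successor on `Fin n`. -/
def finSucc (i : Fin n) : Fin n :=
  ⟨(i.val + 1) % n, Nat.mod_lt _ (Nat.lt_of_le_of_lt (Nat.zero_le _) i.isLt)⟩

open scoped Classical in
/-- The (0-based) lexicographic rank of `μ i` among `μ₁,…,μₙ`:
the number of indices `j` with `μ j` strictly smaller than `μ i`. -/
noncomputable def rankOf {X : Type*} (lt : X → X → Prop) (μ : Fin n → X) (i : Fin n) : ℕ :=
  (univ.filter (fun j => lt (μ j) (μ i))).card

/-- `σ` is the cyclic permutation `(r₁ r₂ ⋯ rₙ)` built from the ranks `rᵢ` of `μᵢ`: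
`σ(rᵢ) = r_{i+1}` (indices mod `n`). -/
def BuiltFrom {X : Type*} (lt : X → X → Prop) (μ : Fin n → X) (σ : Equiv.Perm (Fin n)) : Prop :=
  ∀ i j : Fin n, rankOf lt μ i = j.val → (σ j).val = rankOf lt μ (finSucc i)

/-- `σ` consists of a single `n`-cycle. -/
def IsCyclicPerm (σ : Equiv.Perm (Fin n)) : Prop :=
  ∀ x y : Fin n, ∃ k : ℕ, (σ ^ k) x = y

/-- `σ` is unimodal: decreasing on an initial segment, then increasing. -/
def IsUnimodal (σ : Equiv.Perm (Fin n)) : Prop :=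
  ∃ m : Fin n, (∀ i j : Fin n, i ≤ j → j ≤ m → σ j ≤ σ i) ∧
    (∀ i j : Fin n, m ≤ i → i ≤ j → σ i ≤ σ j)

/-- Cyclic unimodal permutations. -/
def CUPperm (σ : Equiv.Perm (Fin n)) : Prop := IsCyclicPerm σ ∧ IsUnimodal σ

/-- The string `A(σ)` obtained from the itinerary of `σ` (`+ ↦ 0`, `− ↦ 1`),
with the last digit chosen so that the total number of 1's is even.
(Here `m = σ⁻¹ 0` is the unique element with `σ m` least.) -/
def Astr [NeZero n] (σ : Equiv.Perm (Fin n)) : Fin n → Bool :=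
  fun i =>
    if i.val + 1 < n then decide ((σ ^ (i.val + 1)) (σ⁻¹ 0) < σ⁻¹ 0)
    else decide (Odd ((univ.filter (fun j : Fin n =>
      j.val + 1 < n ∧ (σ ^ (j.val + 1)) (σ⁻¹ 0) < σ⁻¹ 0)).card))

/-- The string used for `Ψ(σ)`: itinerary digits with the last digit chosen
so that the total number of 1's is odd. -/
def BstrOdd [NeZero n] (σ : Equiv.Perm (Fin n)) : Fin n → Bool :=
  fun i =>
    if i.val + 1 < n then decide ((σ ^ (i.val + 1)) (σ⁻¹ 0) < σ⁻¹ 0)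
    else !(decide (Odd ((univ.filter (fun j : Fin n =>
      j.val + 1 < n ∧ (σ ^ (j.val + 1)) (σ⁻¹ 0) < σ⁻¹ 0)).card)))

/-- The itinerary of a cyclic unimodal permutation: `none` encodes `⋆` (position `n`),
`some true` encodes `−` (i.e. `σⁱ(m) < m`), `some false` encodes `+` (i.e. `σⁱ(m) > m`). -/
def itin [NeZero n] (σ : Equiv.Perm (Fin n)) : Fin n → Option Bool :=
  fun i =>
    if i.val + 1 = n then none
    else some (decide ((σ ^ (i.val + 1)) (σ⁻¹ 0) < σ⁻¹ 0))

/-- `σ` arises from the class `C` by the construction defining `λ`: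
for some representative `t` of `C` beginning with `1`, `σ` is the cyclic permutation
built from the lexicographic ranks of the iterates of `t` under `F` (non-reflexive case)
or of `t^−` under `F̃` (reflexive case). -/
def LamRel [NeZero n] (C : Set (Fin n → Bool)) (σ : Equiv.Perm (Fin n)) : Prop :=
  ∃ t : Fin n → Bool, t 0 = true ∧ C = invClass t ∧
    ((¬ ReflexiveStr t ∧ BuiltFrom strLt (fun i : Fin n => twistF^[i.val] t) σ) ∨
     (ReflexiveStr t ∧ BuiltFrom extLt (fun i : Fin n => extF^[i.val] (t, false)) σ))

/-- `σ` arises from the representative `s` by the Weiss–Rogers construction `Φ`: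
`σ` is the cyclic permutation built from the lexicographic ranks of
`νᵢ = ι(Ξ(L^{i-1}(s)))`. -/
def PhiBuilt (s : Fin n → Bool) (σ : Equiv.Perm (Fin n)) : Prop :=
  BuiltFrom strLt (fun i : Fin n => inv (xi (shiftL^[i.val] s))) σ

end Necklaces

namespace Necklaces


open Function

lemma shiftL_iter_apply (hn : 0 < n) (k : ℕ) (s : Fin n → Bool) (i : Fin n) :
    shiftL^[k] s i = s ⟨(i.val + k) % n, Nat.mod_lt _ hn⟩ := by
  induction k generalizing i with
  | zero =>
    show s i = s _
    congr 1
    simp [Fin.ext_iff, Nat.mod_eq_of_lt i.isLt]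
  | succ k ih =>
    rw [Function.iterate_succ_apply', shiftL, ih]
    show s _ = s _
    congr 1
    simp only [Fin.ext_iff, Nat.mod_add_mod]
    congr 1
    omega

lemma shiftL_iter_n (hn : 0 < n) (s : Fin n → Bool) : shiftL^[n] s = s := by
  funext i
  rw [shiftL_iter_apply hn]
  congr 1
  simp [Fin.ext_iff, Nat.add_mod, Nat.mod_self, Nat.mod_eq_of_lt i.isLt]

lemma shiftL_iter_nmul (hn : 0 < n) (c : ℕ) (s : Fin n → Bool) : shiftL^[n * c] s = s := by
  induction c with
  | zero => simp
  | succ c ih => rw [Nat.mul_succ, Function.iterate_add_apply, shiftL_iter_n hn, ih]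

lemma shiftL_iter_mod (hn : 0 < n) (k : ℕ) (s : Fin n → Bool) :
    shiftL^[k] s = shiftL^[k % n] s := by
  conv_lhs => rw [← Nat.mod_add_div k n, Function.iterate_add_apply,
    shiftL_iter_nmul hn, ]

lemma shiftL_cancel (hn : 0 < n) {s : Fin n → Bool} {j k : ℕ} (hjk : j ≤ k)
    (h : shiftL^[j] s = shiftL^[k] s) : shiftL^[k - j] s = s := by
  have hj : j ≤ n * (j + 1) := by nlinarith
  have h1 : shiftL^[n * (j+1) - j] (shiftL^[j] s) = s := by
    rw [← Function.iterate_add_apply]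
    rw [show n * (j+1) - j + j = n * (j+1) by omega]
    exact shiftL_iter_nmul hn _ s
  have h2 : shiftL^[n * (j+1) - j] (shiftL^[k] s) = shiftL^[k - j] s := by
    rw [← Function.iterate_add_apply]
    rw [show n * (j+1) - j + k = (k - j) + n * (j+1) by omega,
      Function.iterate_add_apply, shiftL_iter_nmul hn]
  rw [← h2, ← h, h1]

lemma inv_inv (s : Fin n → Bool) : inv (inv s) = s := by
  funext i; simp [inv]

lemma shiftL_inv (s : Fin n → Bool) : shiftL (inv s) = inv (shiftL s) := rfl

lemma shiftL_iter_inv (k : ℕ) (s : Fin n → Bool) :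
    shiftL^[k] (inv s) = inv (shiftL^[k] s) := by
  induction k with
  | zero => rfl
  | succ k ih => rw [Function.iterate_succ_apply', Function.iterate_succ_apply', ih, shiftL_inv]

/-- abbreviation for minimal period -/
noncomputable def mp (s : Fin n → Bool) : ℕ := Function.minimalPeriod shiftL s

lemma mem_periodicPts (hn : 0 < n) (s : Fin n → Bool) : s ∈ periodicPts (shiftL (n := n)) :=
  ⟨n, hn, shiftL_iter_n hn s⟩

lemma mp_pos (hn : 0 < n) (s : Fin n → Bool) : 0 < mp s :=
  Function.minimalPeriod_pos_of_mem_periodicPts (mem_periodicPts hn s)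

lemma period_iff (s : Fin n → Bool) {k : ℕ} :
    shiftL^[k] s = s ↔ mp s ∣ k :=
  Function.isPeriodicPt_iff_minimalPeriod_dvd

lemma mp_dvd (hn : 0 < n) (s : Fin n → Bool) : mp s ∣ n :=
  (period_iff s).mp (shiftL_iter_n hn s)

lemma period_of_dvd {s : Fin n → Bool} {k : ℕ} (h : mp s ∣ k) : shiftL^[k] s = s :=
  (period_iff s).mpr h

lemma primitive_iff_mp (hn : 0 < n) (s : Fin n → Bool) : Primitive s ↔ mp s = n := by
  constructor
  · intro hp
    have h1 := mp_dvd hn s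
    have h2 := mp_pos hn s
    rcases lt_or_eq_of_le (Nat.le_of_dvd hn h1) with h | h
    · exact absurd (period_of_dvd dvd_rfl) (hp _ h2 h)
    · exact h
  · intro h k hk hkn he
    have := (period_iff s).mp he
    rw [h] at this
    exact absurd (Nat.le_of_dvd hk this) (by omega)

lemma ne_inv_self (hn : 0 < n) (s : Fin n → Bool) : s ≠ inv s := by
  intro h
  have := congrFun h ⟨0, hn⟩
  simp [inv] at this

/-- Lemma A: if some shift of `s` equals `inv s`, then the minimal period `d` is even,
`shiftL^[d/2] s = inv s`. -/
lemma refl_structure (hn : 0 < n) {s : Fin n → Bool} {k : ℕ} (hk : shiftL^[k] s = inv s) :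
    mp s % 2 = 0 ∧ shiftL^[mp s / 2] s = inv s ∧ k % mp s = mp s / 2 := by
  set d := mp s with hd
  have hdpos := mp_pos hn s
  set r := k % d with hr
  have hrs : shiftL^[r] s = inv s := by
    have : shiftL^[r + d * (k / d)] s = shiftL^[r] s := by
      rw [Function.iterate_add_apply, period_of_dvd (Dvd.intro _ rfl)]
    rw [← this, show r + d * (k / d) = k from Nat.mod_add_div k d, hk]
  have hr0 : r ≠ 0 := by
    intro h
    rw [h] at hrs
    exact ne_inv_self hn s hrs
  have h2r : shiftL^[2 * r] s = s := by
    rw [two_mul, Function.iterate_add_apply, hrs, shiftL_iter_inv, hrs, inv_inv]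
  have hdvd : d ∣ 2 * r := (period_iff s).mp h2r
  have hrd : r < d := Nat.mod_lt _ hdpos
  have : 2 * r = d := by
    rcases hdvd with ⟨c, hc⟩
    rcases Nat.lt_or_ge c 2 with h | h
    · interval_cases c <;> omega
    · nlinarith
  refine ⟨by omega, ?_, by omega⟩
  rw [show d / 2 = r by omega]
  exact hrs

lemma div_mod_of {h q r a : ℕ} (hh : 0 < h) (hr : r < h) (ha : a = h * q + r) :
    a / h = q ∧ a % h = r := by
  subst ha
  rw [Nat.mul_add_div hh, Nat.mul_add_mod, Nat.div_eq_of_lt hr, Nat.mod_eq_of_lt hr,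
    Nat.add_zero]
  exact ⟨rfl, rfl⟩

lemma det_of_period (hn : 0 < n) {e : ℕ} (he : 0 < e) (hen : e ≤ n) {s : Fin n → Bool}
    (hp : shiftL^[e] s = s) (i : Fin n) :
    s i = s ⟨i.val % e, lt_of_lt_of_le (Nat.mod_lt _ he) hen⟩ := by
  have hdvd : mp s ∣ e * (i.val / e) := ((period_iff s).mp hp).mul_right _
  have h2 := shiftL_iter_apply hn (e * (i.val / e)) s
    ⟨i.val % e, lt_of_lt_of_le (Nat.mod_lt _ he) hen⟩
  rw [period_of_dvd hdvd] at h2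
  rw [h2]
  congr 1
  simp only [Fin.ext_iff]
  rw [Nat.mod_add_div, Nat.mod_eq_of_lt i.isLt]

lemma det_of_anti (hn : 0 < n) {h : ℕ} (hh : 0 < h) {s : Fin n → Bool}
    (ha : shiftL^[h] s = inv s) :
    ∀ q r (hr : r < h) (hlt : h * q + r < n),
      s ⟨h * q + r, hlt⟩ =
        xor (s ⟨r, lt_of_le_of_lt (Nat.le_add_left r _) hlt⟩) (decide (q % 2 = 1)) := by
  intro q
  induction q with
  | zero =>
    intro r hr hlt
    simp
  | succ q ih =>
    intro r hr hlt
    have hexp : h * (q + 1) = h * q + h := by ring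
    have hlt' : h * q + r < n := by omega
    have hstep := congrFun ha ⟨h * q + r, hlt'⟩
    rw [shiftL_iter_apply hn] at hstep
    simp only [inv] at hstep
    have hmod : (h * q + r + h) % n = h * (q + 1) + r := by
      rw [Nat.mod_eq_of_lt (by omega)]; omega
    have hkey : s ⟨h * (q + 1) + r, hlt⟩ = !(s ⟨h * q + r, hlt'⟩) := by
      rw [← hstep]; congr 1; simp [Fin.ext_iff, hmod]
    rw [hkey, ih r hr hlt']
    have hpar : decide ((q + 1) % 2 = 1) = !decide (q % 2 = 1) := by
      rcases Nat.mod_two_eq_zero_or_one q with h2 | h2 <;> simp [Nat.add_mod, h2]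
    rw [hpar]
    cases s ⟨r, _⟩ <;> cases decide (q % 2 = 1) <;> rfl

/-- periodic extension -/
def extP {n e : ℕ} (he : 0 < e) (t : Fin e → Bool) : Fin n → Bool :=
  fun i => t ⟨i.val % e, Nat.mod_lt _ he⟩

lemma extP_periodic (hn : 0 < n) {e : ℕ} (he : 0 < e) (hd : e ∣ n) (t : Fin e → Bool) :
    shiftL^[e] (extP (n := n) he t) = extP he t := by
  funext i
  rw [shiftL_iter_apply hn]
  show t _ = t _
  congr 1
  simp only [Fin.ext_iff]
  conv_lhs => rw [Nat.mod_mod_of_dvd _ hd, Nat.add_mod_right]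

/-- antiperiodic extension -/
def extA {n h : ℕ} (hh : 0 < h) (t : Fin h → Bool) : Fin n → Bool :=
  fun i => xor (t ⟨i.val % h, Nat.mod_lt _ hh⟩) (decide (i.val / h % 2 = 1))

lemma extA_anti (hn : 0 < n) {h : ℕ} (hh : 0 < h) (hd : 2 * h ∣ n) (t : Fin h → Bool) :
    shiftL^[h] (extA (n := n) hh t) = inv (extA hh t) := by
  obtain ⟨m, hm⟩ := hd
  have hm1 : 0 < m := by nlinarith
  funext i
  rw [shiftL_iter_apply hn]
  show (t ⟨(i.val + h) % n % h, Nat.mod_lt _ hh⟩ ^^ decide ((i.val + h) % n / h % 2 = 1))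
      = !(t ⟨i.val % h, Nat.mod_lt _ hh⟩ ^^ decide (i.val / h % 2 = 1))
  obtain ⟨m', rfl⟩ : ∃ m', m = m' + 1 := ⟨m - 1, by omega⟩
  have e0 : n = 2 * (h * m') + 2 * h := by rw [hm]; ring
  have hin := i.isLt
  rcases Nat.lt_or_ge (i.val + h) n with hc | hc
  · -- no wraparound
    have e1 : h * (i.val / h + 1) = h * (i.val / h) + h := by ring
    have e2 := Nat.div_add_mod i.val h
    have k1 : (i.val + h) % n = h * (i.val / h + 1) + i.val % h := by
      rw [Nat.mod_eq_of_lt hc]; omega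
    obtain ⟨kd, km⟩ := div_mod_of hh (Nat.mod_lt i.val hh) k1
    have kf : (⟨(i.val + h) % n % h, Nat.mod_lt _ hh⟩ : Fin h)
        = ⟨i.val % h, Nat.mod_lt _ hh⟩ := Fin.ext km
    rw [kf, kd]
    rcases Nat.mod_two_eq_zero_or_one (i.val / h) with hp | hp <;>
      simp [Nat.add_mod, hp]
  · -- wraparound
    have k0 : i.val + h - n < h := by omega
    have e1 : h * (2 * m' + 1) = 2 * (h * m') + h := by ring
    have k1 : (i.val + h) % n = i.val + h - n := by
      rw [Nat.mod_eq_sub_mod hc, Nat.mod_eq_of_lt (by omega)]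
    obtain ⟨kd, km⟩ := div_mod_of hh k0
      (show i.val + h - n = h * 0 + (i.val + h - n) by omega)
    obtain ⟨kd2, km2⟩ := div_mod_of hh k0
      (show i.val = h * (2 * m' + 1) + (i.val + h - n) by omega)
    have kf : (⟨(i.val + h) % n % h, Nat.mod_lt _ hh⟩ : Fin h)
        = ⟨i.val % h, Nat.mod_lt _ hh⟩ := by
      apply Fin.ext
      show (i.val + h) % n % h = i.val % h
      rw [k1, km, km2]
    rw [kf, k1, kd, kd2]
    have h21 : (2 * m' + 1) % 2 = 1 := by omega
    simp [h21]

open scoped Classical in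
lemma card_periodic (hn : 0 < n) {e : ℕ} (he : 0 < e) (hd : e ∣ n) :
    (univ.filter (fun s : Fin n → Bool => shiftL^[e] s = s)).card = 2 ^ e := by
  have hen : e ≤ n := Nat.le_of_dvd hn hd
  rw [show (2:ℕ) ^ e = Fintype.card (Fin e → Bool) by simp [Fintype.card_fun],
    ← Finset.card_univ]
  apply Finset.card_bij'
    (i := fun s _ => fun j : Fin e => s ⟨j.val, lt_of_lt_of_le j.isLt hen⟩)
    (j := fun t _ => extP he t)
  · intro s hs; exact mem_univ _
  · intro t ht
    simp only [mem_filter, mem_univ, true_and]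
    exact extP_periodic hn he hd t
  · intro s hs
    simp only [mem_filter, mem_univ, true_and] at hs
    funext i
    rw [det_of_period hn he hen hs i]
    rfl
  · intro t ht
    funext j
    show t _ = t _
    congr 1
    simp [Fin.ext_iff, Nat.mod_eq_of_lt j.isLt]

open scoped Classical in
lemma card_anti (hn : 0 < n) {h : ℕ} (hh : 0 < h) (hd : 2 * h ∣ n) :
    (univ.filter (fun s : Fin n → Bool => shiftL^[h] s = inv s)).card = 2 ^ h := by
  have hen : h ≤ n := le_trans (by omega) (Nat.le_of_dvd hn hd)
  rw [show (2:ℕ) ^ h = Fintype.card (Fin h → Bool) by simp [Fintype.card_fun],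
    ← Finset.card_univ]
  apply Finset.card_bij'
    (i := fun s _ => fun j : Fin h => s ⟨j.val, lt_of_lt_of_le j.isLt hen⟩)
    (j := fun t _ => extA hh t)
  · intro s hs; exact mem_univ _
  · intro t ht
    simp only [mem_filter, mem_univ, true_and]
    exact extA_anti hn hh hd t
  · intro s hs
    simp only [mem_filter, mem_univ, true_and] at hs
    funext i
    have hdm := det_of_anti hn hh hs (i.val / h) (i.val % h) (Nat.mod_lt _ hh)
      (by rw [Nat.div_add_mod]; exact i.isLt)
    have hi : (⟨h * (i.val / h) + i.val % h,
        by rw [Nat.div_add_mod]; exact i.isLt⟩ : Fin n) = i := by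
      simp [Fin.ext_iff, Nat.div_add_mod]
    rw [hi] at hdm
    rw [hdm]
    rfl
  · intro t ht
    funext j
    show xor (t _) _ = t _
    have h1 : j.val % h = j.val := Nat.mod_eq_of_lt j.isLt
    have h2 : j.val / h = 0 := Nat.div_eq_of_lt j.isLt
    simp [h1, h2]

open scoped Classical in
noncomputable def fcard (n d : ℕ) : ℕ :=
  (univ.filter (fun s : Fin n → Bool => mp s = d)).card

open scoped Classical in
noncomputable def rcard (n d : ℕ) : ℕ :=
  (univ.filter (fun s : Fin n → Bool => mp s = d ∧ shiftL^[d / 2] s = inv s)).card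

open scoped Classical in
lemma sum_fcard (hn : 0 < n) {e : ℕ} (he : 0 < e) (hd : e ∣ n) :
    ∑ d ∈ e.divisors, fcard n d = 2 ^ e := by
  rw [← card_periodic hn he hd]
  rw [Finset.card_eq_sum_card_fiberwise
    (f := fun s : Fin n → Bool => mp s) (t := e.divisors) ?_]
  · apply Finset.sum_congr rfl
    intro d hd'
    rw [Nat.mem_divisors] at hd'
    unfold fcard
    congr 1
    ext s
    simp only [mem_filter, mem_univ, true_and]
    constructor
    · intro h2
      exact ⟨period_of_dvd (h2 ▸ hd'.1), h2⟩
    · rintro ⟨_, h2⟩; exact h2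
  · intro s hs
    simp only [mem_coe, mem_filter, mem_univ, true_and] at hs
    rw [mem_coe, Nat.mem_divisors]
    exact ⟨(period_iff s).mp hs, he.ne'⟩

open scoped Classical in
lemma sum_rcard (hn : 0 < n) {A t : ℕ} (hA : 0 < A) (hA2 : ∃ b, A = 2 ^ b) (ht : Odd t)
    (hdvd : 2 * A * t ∣ n) :
    ∑ c ∈ t.divisors, rcard n (2 * A * c) = 2 ^ (A * t) := by
  have ht0 : 0 < t := ht.pos
  have hAt : 0 < A * t := by positivity
  have h2At : 2 * (A * t) ∣ n := by rw [← mul_assoc]; exact hdvd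
  rw [← card_anti hn hAt h2At]
  -- the common structure facts for members
  have struct : ∀ s : Fin n → Bool, shiftL^[A * t] s = inv s →
      ∃ c, c ∣ t ∧ mp s = 2 * A * c ∧ shiftL^[A * c] s = inv s := by
    intro s hs
    obtain ⟨hev, hhalf, hmod⟩ := refl_structure hn hs
    set d := mp s with hdd
    have hdpos := mp_pos hn s
    -- d ∣ 2At and (2At)/d odd
    have hper : shiftL^[2 * (A * t)] s = s := by
      rw [two_mul, Function.iterate_add_apply, hs, shiftL_iter_inv, hs, inv_inv]
    have hddvd : d ∣ 2 * (A * t) := (period_iff s).mp hper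
    have hodd : 2 * (A * t) = d * (2 * ((A * t) / d) + 1) := by
      have h1 : A * t = d * ((A * t) / d) + (A * t) % d := (Nat.div_add_mod _ _).symm
      have h2 : d * (2 * ((A * t) / d) + 1) = 2 * (d * ((A * t) / d)) + d := by ring
      omega
    -- 2A ∣ d since (2At)/d = odd and 2A * t = d * odd with t odd
    have hq : Odd (2 * ((A * t) / d) + 1) := ⟨_, by ring⟩
    have h2A : 2 * A ∣ d := by
      obtain ⟨b, hAe⟩ := hA2
      have hcop : ∀ X, Odd X → Nat.Coprime (2 * A) X := by
        intro X hX
        rw [hAe, show 2 * 2 ^ b = 2 ^ (b + 1) by ring]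
        exact Nat.Coprime.pow_left _ (Nat.coprime_two_left.mpr hX)
      have hdvd2 : 2 * A ∣ d * (2 * ((A * t) / d) + 1) := by
        rw [← hodd]
        exact ⟨t, by ring⟩
      exact (hcop _ hq).dvd_of_dvd_mul_right hdvd2
    obtain ⟨c, hc⟩ := h2A
    refine ⟨c, ?_, hc, ?_⟩
    · -- c ∣ t
      have hstep : (2 * A) * t = (2 * A) * (c * (2 * ((A * t) / d) + 1)) := by
        have h9 : 2 * A * t = 2 * (A * t) := by ring
        rw [h9, hodd, hc]
        ring
      have := Nat.eq_of_mul_eq_mul_left (show 0 < 2 * A by omega) hstep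
      exact Dvd.intro _ this.symm
    · have h9 : d = 2 * (A * c) := by rw [hc]; ring
      have : d / 2 = A * c := by omega
      rw [← this]
      exact hhalf
  rw [Finset.card_eq_sum_card_fiberwise
    (f := fun s : Fin n → Bool => mp s / (2 * A)) (t := t.divisors) ?_]
  · apply Finset.sum_congr rfl
    intro c hc'
    rw [Nat.mem_divisors] at hc'
    unfold rcard
    congr 1
    ext s
    simp only [mem_filter, mem_univ, true_and]
    constructor
    · rintro ⟨h1, h2⟩
      have hc0 : 0 < c := by
        rcases Nat.eq_zero_or_pos c with h | h
        · exfalso; rw [h, Nat.mul_zero] at h1; exact (mp_pos hn s).ne' h1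
        · exact h
      have h9 : 2 * A * c = 2 * (A * c) := by ring
      have hd2 : 2 * A * c / 2 = A * c := by omega
      rw [hd2] at h2
      constructor
      · -- shiftL^[A*t] s = inv s
        obtain ⟨q, hq⟩ : ∃ q, t / c = 2 * q + 1 := by
          have htc : Odd (t / c) := by
            rcases ht with ⟨k, hk⟩
            obtain ⟨u, hu⟩ := hc'.1
            rcases Nat.even_or_odd (t / c) with hev | hod
            · exfalso
              rcases hev with ⟨v, hv⟩
              rw [hu, Nat.mul_div_cancel_left _ hc0] at hv
              have h8 : t = 2 * (c * v) := by rw [hu, hv]; ring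
              omega
            · exact hod
          rcases htc with ⟨q, hq⟩
          exact ⟨q, by omega⟩
        have htc2 : t = c * (2 * q + 1) := by
          obtain ⟨u, hu⟩ := hc'.1
          rw [hu, Nat.mul_div_cancel_left _ hc0] at hq
          rw [hu, hq]
        have hAt2 : A * t = A * c + q * (2 * A * c) := by rw [htc2]; ring
        rw [hAt2, Function.iterate_add_apply]
        have : shiftL^[q * (2 * A * c)] s = s := period_of_dvd (by rw [h1]; exact dvd_mul_left _ _)
        rw [this, h2]
      · rw [h1, Nat.mul_div_cancel_left _ (by omega : 0 < 2 * A)]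
    · rintro ⟨h1, h2⟩
      obtain ⟨c', hc'd, hmp, hhalf⟩ := struct s h1
      rw [hmp, Nat.mul_div_cancel_left _ (by omega : 0 < 2 * A)] at h2
      subst h2
      have h9 : 2 * A * c' = 2 * (A * c') := by ring
      have hd2 : 2 * A * c' / 2 = A * c' := by omega
      exact ⟨hmp, by rw [hd2]; exact hhalf⟩
  · intro s hs
    simp only [mem_coe, mem_filter, mem_univ, true_and] at hs
    obtain ⟨c, hcd, hmp, _⟩ := struct s hs
    rw [mem_coe, Nat.mem_divisors]
    show mp s / (2 * A) ∣ t ∧ t ≠ 0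
    rw [hmp, Nat.mul_div_cancel_left _ (by omega : 0 < 2 * A)]
    exact ⟨hcd, ht0.ne'⟩

lemma iter_comm (a b : ℕ) (s : Fin n → Bool) :
    shiftL^[a] (shiftL^[b] s) = shiftL^[b] (shiftL^[a] s) := by
  rw [← Function.iterate_add_apply, ← Function.iterate_add_apply, Nat.add_comm]

lemma shift_shift_cancel (hn : 0 < n) (k j : ℕ) (s : Fin n → Bool) :
    shiftL^[j + n * (k + 1) - k] (shiftL^[k] s) = shiftL^[j] s := by
  have hk : k + 1 ≤ n * (k + 1) := Nat.le_mul_of_pos_left _ hn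
  rw [← Function.iterate_add_apply,
    show j + n * (k + 1) - k + k = j + n * (k + 1) by omega,
    Function.iterate_add_apply, shiftL_iter_nmul hn]

lemma mem_invClass_self (s : Fin n → Bool) : s ∈ invClass s := ⟨0, Or.inl rfl⟩

lemma mp_shift (hn : 0 < n) (k : ℕ) (s : Fin n → Bool) : mp (shiftL^[k] s) = mp s := by
  apply Nat.dvd_antisymm
  · rw [← period_iff]
    rw [iter_comm, period_of_dvd dvd_rfl]
  · rw [← period_iff]
    have h1 : shiftL^[mp (shiftL^[k] s)] (shiftL^[k] s) = shiftL^[k] s :=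
      period_of_dvd dvd_rfl
    have h2 := congrArg (shiftL^[0 + n * (k + 1) - k]) h1
    have h3 : shiftL^[0 + n * (k + 1) - k] (shiftL^[mp (shiftL^[k] s)] (shiftL^[k] s))
        = shiftL^[mp (shiftL^[k] s)] (shiftL^[0 + n * (k + 1) - k] (shiftL^[k] s)) :=
      iter_comm _ _ _
    rw [h3, shift_shift_cancel hn k 0 s] at h2
    simpa using h2

lemma mp_inv (s : Fin n → Bool) : mp (inv s) = mp s := by
  apply Nat.dvd_antisymm
  · rw [← period_iff, shiftL_iter_inv, period_of_dvd dvd_rfl]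
  · rw [← period_iff]
    have h1 : shiftL^[mp (inv s)] (inv s) = inv s := period_of_dvd dvd_rfl
    rw [shiftL_iter_inv] at h1
    have := congrArg inv h1
    rwa [inv_inv, inv_inv] at this

lemma primitive_of_mem (hn : 0 < n) {s t : Fin n → Bool} (hp : Primitive s)
    (ht : t ∈ invClass s) : Primitive t := by
  rw [primitive_iff_mp hn] at hp ⊢
  obtain ⟨k, h | h⟩ := ht <;> subst h
  · rw [mp_shift hn, hp]
  · rw [mp_inv, mp_shift hn, hp]

lemma invClass_eq_of_mem (hn : 0 < n) {s t : Fin n → Bool} (ht : t ∈ invClass s) :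
    invClass t = invClass s := by
  have key : ∀ u : Fin n → Bool, ∀ k, invClass (shiftL^[k] u) = invClass u := by
    intro u k
    ext x
    constructor
    · rintro ⟨j, h | h⟩ <;> subst h <;>
        exact ⟨j + k, by rw [Function.iterate_add_apply]; tauto⟩
    · rintro ⟨j, h | h⟩ <;> subst h <;>
        refine ⟨j + n * (k + 1) - k, ?_⟩
      · left; rw [shift_shift_cancel hn]
      · right; rw [shift_shift_cancel hn]
  have key2 : ∀ u : Fin n → Bool, invClass (inv u) = invClass u := by
    intro u
    ext x
    constructor
    · rintro ⟨j, h | h⟩ <;> subst h <;> refine ⟨j, ?_⟩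
      · right; rw [shiftL_iter_inv]
      · left; rw [shiftL_iter_inv, inv_inv]
    · rintro ⟨j, h | h⟩ <;> subst h <;> refine ⟨j, ?_⟩
      · right; rw [shiftL_iter_inv, inv_inv]
      · left; rw [shiftL_iter_inv]
  obtain ⟨k, h | h⟩ := ht <;> subst h
  · exact key s k
  · rw [key2, key s k]

lemma refl_of_mem (hn : 0 < n) {s t : Fin n → Bool} (hr : ReflexiveStr s)
    (ht : t ∈ invClass s) : ReflexiveStr t := by
  obtain ⟨k0, hk0⟩ := hr
  obtain ⟨k, h | h⟩ := ht <;> subst h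
  · exact ⟨k0, by rw [iter_comm, hk0, shiftL_iter_inv]⟩
  · exact ⟨k0, by rw [shiftL_iter_inv, iter_comm, hk0, shiftL_iter_inv, inv_inv]⟩

/-- the orbit Finset -/
def orbF (s : Fin n → Bool) : Finset (Fin n → Bool) :=
  (range n).image (fun k => shiftL^[k] s)

lemma orbF_card (hn : 0 < n) {s : Fin n → Bool} (hp : Primitive s) : (orbF s).card = n := by
  rw [orbF, Finset.card_image_of_injOn, Finset.card_range]
  intro j hj k hk hjk
  simp only [Finset.coe_range, Set.mem_Iio] at hj hk
  by_contra hne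
  rcases Nat.lt_or_ge j k with h | h
  · exact hp (k - j) (by omega) (by omega) (shiftL_cancel hn (by omega) hjk)
  · exact hp (j - k) (by omega) (by omega) (shiftL_cancel hn (by omega) hjk.symm)

lemma coe_cls (hn : 0 < n) (s : Fin n → Bool) :
    invClass s = ↑(orbF s ∪ orbF (inv s)) := by
  ext x
  simp only [Finset.coe_union, Set.mem_union, orbF, Finset.coe_image, Finset.coe_range,
    Set.mem_image, Set.mem_Iio]
  constructor
  · rintro ⟨k, h | h⟩ <;> subst h
    · exact Or.inl ⟨k % n, Nat.mod_lt _ hn, (shiftL_iter_mod hn k s).symm⟩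
    · right
      refine ⟨k % n, Nat.mod_lt _ hn, ?_⟩
      rw [shiftL_iter_inv, ← shiftL_iter_mod hn]
  · rintro (⟨k, _, h⟩ | ⟨k, _, h⟩) <;> subst h
    · exact ⟨k, Or.inl rfl⟩
    · refine ⟨k, Or.inr ?_⟩
      first
      | rfl
      | exact shiftL_iter_inv k s
      | exact (shiftL_iter_inv k s).symm

lemma cls_card_nonrefl (hn : 0 < n) {s : Fin n → Bool} (hp : Primitive s)
    (hr : ¬ReflexiveStr s) : (invClass s).ncard = 2 * n := by
  rw [coe_cls hn, Set.ncard_coe_finset]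
  rw [Finset.card_union_of_disjoint, orbF_card hn hp, orbF_card hn, two_mul]
  · rw [primitive_iff_mp hn, mp_inv, ← primitive_iff_mp hn]; exact hp
  · rw [Finset.disjoint_left]
    rintro x hx hx'
    simp only [orbF, Finset.mem_image, Finset.mem_range] at hx hx'
    obtain ⟨j, hj, rfl⟩ := hx
    obtain ⟨k, hk, hkx⟩ := hx'
    apply hr
    refine ⟨0 + n * (k + 1) - k + j, ?_⟩
    rw [Function.iterate_add_apply, ← hkx, shift_shift_cancel hn k 0 (inv s)]
    simp

lemma cls_card_refl (hn : 0 < n) {s : Fin n → Bool} (hp : Primitive s)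
    (hr : ReflexiveStr s) : (invClass s).ncard = n := by
  rw [coe_cls hn, Set.ncard_coe_finset]
  have hsub : orbF (inv s) ⊆ orbF s := by
    obtain ⟨k0, hk0⟩ := hr
    intro x hx
    simp only [orbF, Finset.mem_image, Finset.mem_range] at hx ⊢
    obtain ⟨j, hj, rfl⟩ := hx
    refine ⟨(j + k0) % n, Nat.mod_lt _ hn, ?_⟩
    rw [← shiftL_iter_mod hn, Function.iterate_add_apply, hk0]
  rw [Finset.union_eq_left.mpr hsub, orbF_card hn hp]

open scoped Classical in
lemma main_count (hn : 0 < n) :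
    2 * n * (Nbar n).ncard = fcard n n + rcard n n := by
  set T : Finset (Fin n → Bool) := univ.filter (fun s => Primitive s) with hT
  set TR : Finset (Fin n → Bool) := univ.filter (fun s => Primitive s ∧ ReflexiveStr s) with hTR
  set Q : Finset (Set (Fin n → Bool)) := T.image invClass with hQ
  -- Nbar is Q
  have hNbar : Nbar n = ↑Q := by
    ext C
    simp only [Nbar, Set.mem_setOf_eq, hQ, Finset.coe_image, Set.mem_image, Finset.mem_coe,
      hT, Finset.mem_filter, Finset.mem_univ, true_and]
    constructor
    · rintro ⟨s, hp, rfl⟩; exact ⟨s, hp, rfl⟩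
    · rintro ⟨s, hp, rfl⟩; exact ⟨s, hp, rfl⟩
  have hncard : (Nbar n).ncard = Q.card := by rw [hNbar, Set.ncard_coe_finset]
  -- fibers
  have hfibT : ∀ C ∈ Q, ∀ s₀, Primitive s₀ → C = invClass s₀ →
      (T.filter (fun s => invClass s = C)).card = (invClass s₀).ncard := by
    intro C _ s₀ hp₀ hC
    subst hC
    have hset : (T.filter (fun s => invClass s = invClass s₀) : Set (Fin n → Bool))
        = invClass s₀ := by
      ext s
      simp only [Finset.coe_filter, Set.mem_setOf_eq, hT, Finset.mem_filter, Finset.mem_univ,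
        true_and]
      constructor
      · rintro ⟨_, h2⟩
        rw [← h2]; exact mem_invClass_self s
      · intro hs
        exact ⟨primitive_of_mem hn hp₀ hs, invClass_eq_of_mem hn hs⟩
    conv_rhs => rw [← hset]
    rw [Set.ncard_coe_finset]
  have hfibTR : ∀ C ∈ Q, ∀ s₀, Primitive s₀ → C = invClass s₀ →
      (TR.filter (fun s => invClass s = C)).card
        = (if ReflexiveStr s₀ then (invClass s₀).ncard else 0) := by
    intro C _ s₀ hp₀ hC
    subst hC
    by_cases hr : ReflexiveStr s₀
    · rw [if_pos hr]
      have hset : (TR.filter (fun s => invClass s = invClass s₀) : Set (Fin n → Bool))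
          = invClass s₀ := by
        ext s
        simp only [Finset.coe_filter, Set.mem_setOf_eq, hTR, Finset.mem_filter, Finset.mem_univ,
          true_and]
        constructor
        · rintro ⟨_, h2⟩
          rw [← h2]; exact mem_invClass_self s
        · intro hs
          exact ⟨⟨primitive_of_mem hn hp₀ hs, refl_of_mem hn hr hs⟩, invClass_eq_of_mem hn hs⟩
      conv_rhs => rw [← hset]
      rw [Set.ncard_coe_finset]
    · rw [if_neg hr, Finset.card_eq_zero]
      rw [Finset.filter_eq_empty_iff]
      rintro s hs
      simp only [hTR, Finset.mem_filter, Finset.mem_univ, true_and] at hs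
      intro hCs
      apply hr
      apply refl_of_mem hn hs.2
      rw [hCs]
      exact mem_invClass_self s₀
  -- fiberwise sums
  have hTsum : T.card = ∑ C ∈ Q, (T.filter (fun s => invClass s = C)).card := by
    apply Finset.card_eq_sum_card_fiberwise
    intro s hs
    exact Finset.mem_image_of_mem _ hs
  have hTRsum : TR.card = ∑ C ∈ Q, (TR.filter (fun s => invClass s = C)).card := by
    apply Finset.card_eq_sum_card_fiberwise
    intro s hs
    simp only [hTR, Finset.mem_coe, Finset.mem_filter] at hs
    exact Finset.mem_image_of_mem _ (by simp [hT, hs.2.1])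
  -- per-class total
  have hkey : ∀ C ∈ Q, (T.filter (fun s => invClass s = C)).card
      + (TR.filter (fun s => invClass s = C)).card = 2 * n := by
    intro C hC
    obtain ⟨s₀, hs₀, hCs⟩ := Finset.mem_image.mp hC
    simp only [hT, Finset.mem_filter, Finset.mem_univ, true_and] at hs₀
    rw [hfibT C hC s₀ hs₀ hCs.symm, hfibTR C hC s₀ hs₀ hCs.symm]
    by_cases hr : ReflexiveStr s₀
    · rw [if_pos hr, cls_card_refl hn hs₀ hr]; omega
    · rw [if_neg hr, cls_card_nonrefl hn hs₀ hr]
      omega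
  -- combine
  have hsum : T.card + TR.card = 2 * n * Q.card := by
    rw [hTsum, hTRsum, ← Finset.sum_add_distrib]
    rw [Finset.sum_congr rfl hkey, Finset.sum_const, smul_eq_mul, mul_comm]
  -- identify T and TR
  have hTf : T.card = fcard n n := by
    unfold fcard
    congr 1
    ext s
    simp [hT, primitive_iff_mp hn]
  have hTRr : TR.card = rcard n n := by
    unfold rcard
    congr 1
    ext s
    simp only [hTR, Finset.mem_filter, Finset.mem_univ, true_and]
    constructor
    · rintro ⟨hp, hr⟩
      obtain ⟨k, hk⟩ := hr
      obtain ⟨_, h2, _⟩ := refl_structure hn hk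
      rw [primitive_iff_mp hn] at hp
      rw [hp] at h2
      exact ⟨hp, h2⟩
    · rintro ⟨hp, hr⟩
      exact ⟨(primitive_iff_mp hn s).mpr hp, ⟨n / 2, hr⟩⟩
  rw [hncard, ← hsum, hTf, hTRr]

open ArithmeticFunction in
lemma fcard_eq (hn : 0 < n) :
    (fcard n n : ℤ) = ∑ d ∈ n.divisors, moebius d * 2 ^ (n / d) := by
  have key := (sum_eq_iff_sum_mul_moebius_eq_on (R := ℤ)
    (f := fun d => (fcard n d : ℤ)) (g := fun e => (2 : ℤ) ^ e)
    {d | d ∣ n} (fun m k hmk hk => hmk.trans hk)).mp ?_ n hn dvd_rfl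
  · simp only [Int.cast_id] at key
    rw [← key, Nat.sum_divisorsAntidiagonal (f := fun d e => (moebius d : ℤ) * 2 ^ e)]
  · intro e he hed
    rw [← Nat.cast_sum, sum_fcard hn he hed]
    push_cast
    ring

open scoped Classical in
lemma rcard_eq_zero_of_odd (hn : 0 < n) (hodd : n % 2 = 1) : rcard n n = 0 := by
  rw [rcard, Finset.card_eq_zero, Finset.filter_eq_empty_iff]
  rintro s _ ⟨h1, h2⟩
  obtain ⟨hev, -, -⟩ := refl_structure hn h2
  rw [h1] at hev
  omega

open ArithmeticFunction in
lemma rcard_eq (hn : 0 < n) (heven : n % 2 = 0) :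
    (rcard n n : ℤ) = ∑ m ∈ n.divisors.filter (fun m => m % 2 = 1),
      moebius m * 2 ^ (n / (2 * m)) := by
  set a := n.factorization 2 with ha
  set A := 2 ^ (a - 1) with hA
  set w := ordCompl[2] n with hw
  have ha1 : 1 ≤ a := Nat.Prime.factorization_pos_of_dvd Nat.prime_two hn.ne'
    (Nat.dvd_of_mod_eq_zero heven)
  have h2A : 2 * A = 2 ^ a := by
    rw [hA, ← pow_succ']
    congr 1
    omega
  have hprod : 2 * A * w = n := by rw [h2A, hw]; exact Nat.ordProj_mul_ordCompl_eq_self n 2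
  have hwodd : ¬ 2 ∣ w := Nat.not_dvd_ordCompl Nat.prime_two hn.ne'
  have hwpos : 0 < w := Nat.ordCompl_pos 2 hn.ne'
  have hApos : 0 < A := Nat.pow_pos (by norm_num)
  -- Möbius inversion over divisors of w
  have key := (sum_eq_iff_sum_mul_moebius_eq_on (R := ℤ)
    (f := fun c => (rcard n (2 * A * c) : ℤ)) (g := fun t => (2 : ℤ) ^ (A * t))
    {t | t ∣ w} (fun m k hmk hk => hmk.trans hk)).mp ?_ w hwpos dvd_rfl
  · have hrn : rcard n (2 * A * w) = rcard n n := by rw [hprod]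
    rw [hrn] at key
    simp only [Int.cast_id] at key
    rw [← key, Nat.sum_divisorsAntidiagonal (f := fun d e => (moebius d : ℤ) * 2 ^ (A * e))]
    -- identify index sets and exponents
    have hsets : w.divisors = n.divisors.filter (fun m => m % 2 = 1) := by
      ext m
      simp only [Nat.mem_divisors, Finset.mem_filter]
      constructor
      · rintro ⟨hmw, -⟩
        refine ⟨⟨hmw.trans (Nat.ordCompl_dvd n 2), hn.ne'⟩, ?_⟩
        have : ¬ 2 ∣ m := fun h => hwodd (h.trans hmw)
        omega
      · rintro ⟨⟨hmn, -⟩, hm1⟩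
        refine ⟨?_, hwpos.ne'⟩
        have hcop : Nat.Coprime m (2 ^ a) := by
          apply Nat.Coprime.pow_right
          rw [Nat.coprime_two_right]
          exact Nat.odd_iff.mpr hm1
        have hn2 : n = w * 2 ^ a := by rw [← hprod, ← h2A]; ring
        exact hcop.dvd_of_dvd_mul_right (by rw [← hn2]; exact hmn)
    rw [hsets]
    apply Finset.sum_congr rfl
    intro m hm
    simp only [Finset.mem_filter, Nat.mem_divisors] at hm
    obtain ⟨⟨hmn, -⟩, hm1⟩ := hm
    congr 1
    -- A * (w / m) = n / (2 * m)
    have hmw : m ∣ w := by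
      have hcop : Nat.Coprime m (2 ^ a) := by
        apply Nat.Coprime.pow_right
        rw [Nat.coprime_two_right]
        exact Nat.odd_iff.mpr hm1
      have hn2 : n = w * 2 ^ a := by rw [← hprod, ← h2A]; ring
      exact hcop.dvd_of_dvd_mul_right (by rw [← hn2]; exact hmn)
    obtain ⟨u, hu⟩ := hmw
    have hm0 : 0 < m := by omega
    have hwm : w / m = u := by rw [hu, Nat.mul_div_cancel_left _ hm0]
    have hnm : n / (2 * m) = A * u := by
      apply Nat.div_eq_of_eq_mul_left (by omega)
      rw [← hprod, hu]; ring
    rw [hwm, hnm]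
  · intro t ht htw
    have htodd : Odd t := by
      rcases Nat.even_or_odd t with h | h
      · exact absurd ((even_iff_two_dvd.mp h).trans htw) hwodd
      · exact h
    have hdvd : 2 * A * t ∣ n := by
      rw [← hprod]
      exact Nat.mul_dvd_mul_left _ htw
    rw [← Nat.cast_sum, sum_rcard hn hApos ⟨a - 1, rfl⟩ htodd hdvd]
    push_cast
    ring

open ArithmeticFunction in
/-- For every `n ≥ 1`, the number of equivalence classes of primitive
binary strings of length `n` under cyclic shifts and inversion equals
`γₙ = (1/(2n)) Σ_{m ∣ n, m odd} μ(m) 2^{n/m}`; equivalently,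
`2n·|N̄(n)| = Σ_{m ∣ n, m odd} μ(m)·2^{n/m}`. -/
theorem card_Nbar (n : ℕ) (hn : 0 < n) :
    ((2 * n * (Nbar n).ncard : ℕ) : ℤ) =
      ∑ m ∈ n.divisors.filter (fun m => m % 2 = 1), moebius m * 2 ^ (n / m) := by
  have hmc := main_count hn
  rcases Nat.mod_two_eq_zero_or_one n with hpar | hpar
  · -- even case
    have hn2 : 2 * (n / 2) = n := by omega
    have hn2pos : 0 < n / 2 := by omega
    -- even-divisor sum
    have himg : n.divisors.filter (fun d => ¬ d % 2 = 1)
        = (n / 2).divisors.image (fun c => 2 * c) := by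
      ext d
      simp only [Finset.mem_filter, Nat.mem_divisors, Finset.mem_image]
      constructor
      · rintro ⟨⟨hdn, -⟩, hd2⟩
        refine ⟨d / 2, ⟨?_, by omega⟩, by omega⟩
        have hdd : 2 * (d / 2) ∣ 2 * (n / 2) := by
          rw [show 2 * (d / 2) = d by omega, hn2]
          exact hdn
        exact (mul_dvd_mul_iff_left (by norm_num : (2:ℕ) ≠ 0)).mp hdd
      · rintro ⟨c, ⟨hc, -⟩, rfl⟩
        refine ⟨⟨?_, hn.ne'⟩, by omega⟩
        rw [← hn2]
        exact Nat.mul_dvd_mul_left 2 hc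
    have hfiltodd : (n / 2).divisors.filter (fun c => c % 2 = 1)
        = n.divisors.filter (fun c => c % 2 = 1) := by
      ext c
      simp only [Finset.mem_filter, Nat.mem_divisors]
      constructor
      · rintro ⟨⟨hc, -⟩, h1⟩
        exact ⟨⟨hc.trans (Nat.div_dvd_of_dvd (by omega)), hn.ne'⟩, h1⟩
      · rintro ⟨⟨hc, -⟩, h1⟩
        refine ⟨⟨?_, by omega⟩, h1⟩
        have hcop : Nat.Coprime c 2 := Nat.coprime_two_right.mpr (Nat.odd_iff.mpr h1)
        exact hcop.dvd_of_dvd_mul_right (by rw [mul_comm, hn2]; exact hc)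
    have heven_sum : ∑ d ∈ n.divisors.filter (fun d => ¬ d % 2 = 1),
          (moebius d : ℤ) * 2 ^ (n / d)
        = - ∑ m ∈ n.divisors.filter (fun m => m % 2 = 1),
            (moebius m : ℤ) * 2 ^ (n / (2 * m)) := by
      rw [himg, Finset.sum_image (by intro x _ y _ h; simp only at h; omega)]
      rw [← Finset.sum_filter_add_sum_filter_not ((n / 2).divisors) (fun c => c % 2 = 1)]
      have hz : ∑ c ∈ (n / 2).divisors.filter (fun c => ¬ c % 2 = 1),
          (moebius (2 * c) : ℤ) * 2 ^ (n / (2 * c)) = 0 := by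
        apply Finset.sum_eq_zero
        intro c hc
        simp only [Finset.mem_filter, Nat.mem_divisors] at hc
        have : ¬ Squarefree (2 * c) := by
          intro hsq
          have h4 : (2 : ℕ) * 2 ∣ 2 * c := by
            obtain ⟨c', hc'⟩ : ∃ c', c = 2 * c' := ⟨c / 2, by omega⟩
            exact ⟨c', by rw [hc']; ring⟩
          exact Nat.prime_two.not_isUnit (hsq 2 h4)
        rw [moebius_eq_zero_of_not_squarefree this]
        push_cast
        ring
      rw [hz, add_zero]
      have hterm : ∀ c ∈ (n / 2).divisors.filter (fun c => c % 2 = 1),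
          (moebius (2 * c) : ℤ) * 2 ^ (n / (2 * c))
            = -((moebius c : ℤ) * 2 ^ (n / (2 * c))) := by
        intro c hc
        simp only [Finset.mem_filter, Nat.mem_divisors] at hc
        have hcop : Nat.Coprime 2 c := Nat.coprime_two_left.mpr (Nat.odd_iff.mpr hc.2)
        rw [isMultiplicative_moebius.map_mul_of_coprime hcop,
          moebius_apply_prime Nat.prime_two]
        push_cast
        ring
      rw [Finset.sum_congr rfl hterm, hfiltodd, Finset.sum_neg_distrib]
    -- combine
    calc ((2 * n * (Nbar n).ncard : ℕ) : ℤ)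
        = ((fcard n n + rcard n n : ℕ) : ℤ) := by rw [hmc]
      _ = (fcard n n : ℤ) + (rcard n n : ℤ) := by push_cast; ring
      _ = (∑ d ∈ n.divisors, moebius d * 2 ^ (n / d))
          + ∑ m ∈ n.divisors.filter (fun m => m % 2 = 1), moebius m * 2 ^ (n / (2 * m)) := by
            rw [fcard_eq hn, rcard_eq hn hpar]
      _ = _ := by
            rw [← Finset.sum_filter_add_sum_filter_not n.divisors (fun d => d % 2 = 1)
              (fun d => (moebius d : ℤ) * 2 ^ (n / d)), heven_sum]
            ring
  · -- odd case
    have h0 := rcard_eq_zero_of_odd hn hpar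
    have hfilter : n.divisors.filter (fun m => m % 2 = 1) = n.divisors := by
      apply Finset.filter_true_of_mem
      intro d hd
      rw [Nat.mem_divisors] at hd
      have h2 : ¬ 2 ∣ d := by
        intro h2d
        have := h2d.trans hd.1
        omega
      omega
    rw [hfilter, hmc, h0]
    push_cast
    rw [add_zero]
    exact fcard_eq hn

end Necklaces
end

section
/- Let n be even and let s ∈ {0,1}ⁿ be 2-alternating, i.e. s = s′·ι(s′) is the concatenation of a string s′ of length n/2 and its inversion. Then s is non-primitive if and only if there exists an odd integer m ≥ 3 dividing n/2 such that s′ is m-alternating, i.e. s′ is the concatenation of m blocks t, ι(t), t, ι(t), …, t each of length n/(2m). -/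
open Finset

namespace Necklaces

lemma shiftL_iterate_apply {n : ℕ} (hn : 0 < n) (s : Fin n → Bool) (k : ℕ) (i : Fin n) :
    shiftL^[k] s i = s ⟨(i.val + k) % n, Nat.mod_lt _ hn⟩ := by
  induction k generalizing s with
  | zero => simp [Nat.mod_eq_of_lt i.isLt]
  | succ k ih =>
    rw [Function.iterate_succ_apply, ih]
    show s _ = s _
    congr 1
    apply Fin.ext
    show ((i.val + k) % n + 1) % n = (i.val + (k+1)) % n
    rw [Nat.mod_add_mod, Nat.add_assoc]

/-- Let `n` be even and let `s ∈ {0,1}ⁿ` be 2-alternating, i.e. the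
concatenation of a string `s′` of length `n/2` and its inversion. Then `s` is
non-primitive if and only if there exists an odd `m ≥ 3` dividing `n/2` such that `s′` is
`m`-alternating, i.e. `s′` is the concatenation of `m` blocks `t, ι(t), t, …, t`, each of
length `ℓ = n/(2m)` — equivalently, digits of `s` at distance `ℓ` within the first half
are complementary. -/
theorem two_alternating_nonprimitive_iff (n : ℕ) (h0 : 0 < n) (hev : n % 2 = 0)
    (s : Fin n → Bool)
    (h2 : ∀ (j : ℕ) (hj : j < n / 2), s ⟨j + n / 2, by omega⟩ = !(s ⟨j, by omega⟩)) :
    (¬ Primitive s) ↔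
      ∃ m ℓ : ℕ, Odd m ∧ 3 ≤ m ∧ n = 2 * m * ℓ ∧
        ∀ (j : ℕ) (hj : j + ℓ < n / 2),
          s ⟨j + ℓ, by omega⟩ = !(s ⟨j, by omega⟩) := by
  classical
  set f : ℕ → Bool := fun i => s ⟨i % n, Nat.mod_lt _ h0⟩ with hf
  have hsc : ∀ {a b : ℕ} (ha : a < n) (hb : b < n), a = b → s ⟨a, ha⟩ = s ⟨b, hb⟩ := by
    intro a b ha hb h; subst h; rfl
  have hfs : ∀ (i : ℕ), f i = s ⟨i % n, Nat.mod_lt _ h0⟩ := fun i => by rw [hf]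
  have hf_lt : ∀ (i : ℕ) (h : i < n), f i = s ⟨i, h⟩ := by
    intro i h
    rw [hfs]; exact hsc _ _ (Nat.mod_eq_of_lt h)
  have hfmod : ∀ i, f (i % n) = f i := by
    intro i; rw [hfs, hfs]; exact hsc _ _ (Nat.mod_mod_of_dvd i dvd_rfl)
  have hred : ∀ x y, f (x % n + y) = f (x + y) := by
    intro x y
    rw [hfs, hfs]
    exact hsc _ _ (by rw [Nat.mod_add_mod])
  have hn2pos : 0 < n / 2 := by omega
  -- the full antiperiod n/2
  have hH : ∀ i, f (i + n / 2) = !(f i) := by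
    intro i
    have hj : i % n < n := Nat.mod_lt _ h0
    rw [← hred i (n/2)]
    set j := i % n with hjdef
    rw [show f i = s ⟨j, hj⟩ from (hfmod i).symm.trans (hf_lt _ hj)]
    by_cases hc : j < n / 2
    · rw [hf_lt (j + n/2) (by omega)]
      exact h2 j hc
    · have hj2 : j - n/2 < n / 2 := by omega
      have h2' := h2 (j - n/2) hj2
      have heq : f (j + n/2) = s ⟨j - n/2, by omega⟩ := by
        rw [hfs]
        refine hsc _ _ ?_
        rw [Nat.mod_eq_sub_mod (by omega), Nat.mod_eq_of_lt (by omega)]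
        omega
      rw [heq]
      have hjj : s ⟨j, hj⟩ = !(s ⟨j - n/2, by omega⟩) := by
        rw [← h2']
        exact hsc _ _ (by omega)
      rw [hjj, Bool.not_not]
  constructor
  · -- forward direction
    intro hnp
    rw [Primitive] at hnp
    push_neg at hnp
    obtain ⟨k, hk0, hkn, hks⟩ := hnp
    -- k is a period of f
    have hPk : ∀ i, f (i + k) = f i := by
      intro i
      have hcf := congrFun hks ⟨i % n, Nat.mod_lt _ h0⟩
      rw [shiftL_iterate_apply h0] at hcf
      calc f (i + k) = f (i % n + k) := (hred i k).symm
        _ = s ⟨(i % n + k) % n, Nat.mod_lt _ h0⟩ := hfs _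
        _ = s ⟨i % n, Nat.mod_lt _ h0⟩ := hcf
        _ = f i := (hf_lt _ _).symm.trans (hfmod i)
    have hmul : ∀ a, (∀ i, f (i + a) = f i) → ∀ q i, f (i + a * q) = f i := by
      intro a ha q
      induction q with
      | zero => simp
      | succ q ih =>
        intro i
        rw [show i + a * (q+1) = (i + a * q) + a by ring, ha, ih]
    have hex : ∃ d, 0 < d ∧ ∀ i, f (i + d) = f i := ⟨k, hk0, hPk⟩
    obtain ⟨d, ⟨hd0, hPd⟩, hdmin⟩ :
        ∃ d, (0 < d ∧ ∀ i, f (i + d) = f i) ∧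
          ∀ e, e < d → ¬(0 < e ∧ ∀ i, f (i + e) = f i) :=
      ⟨Nat.find hex, Nat.find_spec hex, fun e he => Nat.find_min hex he⟩
    have hdk : d ≤ k := by
      by_contra h
      exact hdmin k (by omega) ⟨hk0, hPk⟩
    have hdn : d < n := lt_of_le_of_lt hdk hkn
    -- every period is a multiple of d
    have hdvd : ∀ a, (∀ i, f (i + a) = f i) → a % d = 0 := by
      intro a ha
      by_contra hne
      have hP : ∀ i, f (i + a % d) = f i := by
        intro i
        calc f (i + a % d) = f (i + a % d + d * (a / d)) := (hmul d hPd _ _).symm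
          _ = f (i + a) := by rw [Nat.add_assoc, Nat.mod_add_div]
          _ = f i := ha i
      exact hdmin (a % d) (Nat.mod_lt _ hd0) ⟨Nat.pos_of_ne_zero hne, hP⟩
    -- the antiperiod r = (n/2) % d
    obtain ⟨r, hrdef⟩ : ∃ r, r = (n / 2) % d := ⟨_, rfl⟩
    have hAr : ∀ i, f (i + r) = !(f i) := by
      intro i
      calc f (i + r) = f (i + r + d * (n / 2 / d)) := (hmul d hPd _ _).symm
        _ = f (i + n / 2) := by rw [hrdef, Nat.add_assoc, Nat.mod_add_div]
        _ = !(f i) := hH i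
    have hr0 : 0 < r := by
      rcases Nat.eq_zero_or_pos r with h | h
      · have hcon := hAr 0
        rw [h] at hcon
        simp at hcon
      · exact h
    have hrd : r < d := by rw [hrdef]; exact Nat.mod_lt _ hd0
    -- 2r is a period, hence d ∣ 2r, hence d = 2r
    have hP2r : ∀ i, f (i + (r + r)) = f i := by
      intro i
      rw [← Nat.add_assoc, hAr, hAr, Bool.not_not]
    have hd2r : (r + r) % d = 0 := hdvd _ hP2r
    have hd_eq : d = r + r :=
      (Nat.eq_of_dvd_of_lt_two_mul (by omega) (Nat.dvd_of_mod_eq_zero hd2r) (by omega)).symm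
    -- assemble m and ℓ
    obtain ⟨q, hqdef⟩ : ∃ q, q = n / 2 / d := ⟨_, rfl⟩
    have hn2 : n / 2 = d * q + r := by
      rw [hqdef, hrdef, Nat.div_add_mod]
    have hnr : n / 2 = (2 * q + 1) * r := by rw [hn2, hd_eq]; ring
    have hq1 : 1 ≤ q := by
      by_contra h
      have hq0 : q = 0 := by omega
      rw [hq0, Nat.mul_zero] at hn2
      omega
    have hnfull : n = 2 * (2 * q + 1) * r := by
      have h1 : n = 2 * ((2 * q + 1) * r) := by omega
      rw [h1, Nat.mul_assoc]
    refine ⟨2 * q + 1, r, Nat.odd_iff.mpr (by omega), by omega, hnfull, ?_⟩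
    intro j hj
    have hh := hAr j
    rw [hf_lt j (by omega), hf_lt (j + r) (by omega)] at hh
    exact hh
  · -- reverse direction
    rintro ⟨m, ℓ, hmodd, hm3, hnml, hA⟩
    have hl0 : 0 < ℓ := by
      rcases Nat.eq_zero_or_pos ℓ with h | h
      · subst h; simp at hnml; omega
      · exact h
    have hml : n = 2 * (m * ℓ) := by rw [hnml]; ring
    have hn2 : n / 2 = m * ℓ := by omega
    obtain ⟨q, hq⟩ := hmodd
    have hmn : n / 2 = q * (2 * ℓ) + ℓ := by rw [hn2, hq]; ring
    have hq1 : 1 ≤ q := by omega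
    have hA' : ∀ j, j + ℓ < n / 2 → f (j + ℓ) = !(f j) := by
      intro j hj
      rw [hf_lt j (by omega), hf_lt (j + ℓ) (by omega)]
      exact hA j hj
    have hCk : ∀ c j, j + c * (2 * ℓ) < n / 2 → f (j + c * (2 * ℓ)) = f j := by
      intro c
      induction c with
      | zero => simp
      | succ c ih =>
        intro j hj
        have hstep : (c + 1) * (2 * ℓ) = c * (2 * ℓ) + 2 * ℓ := by ring
        rw [show j + (c+1) * (2*ℓ) = ((j + c * (2*ℓ)) + ℓ) + ℓ by rw [hstep]; ring]
        rw [hA' _ (by omega), hA' _ (by omega), Bool.not_not]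
        exact ih j (by omega)
    -- antiperiod ℓ for indices below n/2
    have hAhalf : ∀ i, i < n / 2 → f (i + ℓ) = !(f i) := by
      intro i hi
      by_cases hc : i + ℓ < n / 2
      · exact hA' i hc
      · set j := i + ℓ - n / 2 with hjdef
        have hjl : j < ℓ := by omega
        have hieq : i = j + q * (2 * ℓ) := by omega
        have h1 : f (i + ℓ) = !(f j) := by
          rw [show i + ℓ = j + n / 2 by omega]
          exact hH j
        have h2' : f i = f j := by
          rw [hieq]
          exact hCk q j (by omega)
        rw [h1, h2']
    -- full antiperiod ℓ
    have hAfull : ∀ i, f (i + ℓ) = !(f i) := by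
      have step : ∀ i, i < n → f (i + ℓ) = !(f i) := by
        intro i hi
        by_cases hc : i < n / 2
        · exact hAhalf i hc
        · have hi' : i - n / 2 < n / 2 := by omega
          have e1 : f (i + ℓ) = !(f ((i - n/2) + ℓ)) := by
            rw [show i + ℓ = ((i - n/2) + ℓ) + n/2 by omega]
            exact hH _
          have e2 : f i = !(f (i - n/2)) := by
            conv_lhs => rw [show i = (i - n/2) + n/2 by omega]
            exact hH _
          rw [e1, e2, hAhalf _ hi', Bool.not_not]
      intro i
      calc f (i + ℓ) = f (i % n + ℓ) := (hred i ℓ).symm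
        _ = !(f (i % n)) := step _ (Nat.mod_lt _ h0)
        _ = !(f i) := by rw [hfmod]
    -- conclude non-primitivity via the period 2ℓ
    intro hprim
    have h3l : 3 * ℓ ≤ m * ℓ := Nat.mul_le_mul_right ℓ hm3
    refine hprim (2 * ℓ) (by omega) (by omega) ?_
    funext i
    rw [shiftL_iterate_apply h0]
    have hper : f (i.val + 2 * ℓ) = f i.val := by
      rw [show i.val + 2 * ℓ = (i.val + ℓ) + ℓ by ring, hAfull, hAfull, Bool.not_not]
    calc s ⟨(i.val + 2 * ℓ) % n, _⟩ = f (i.val + 2 * ℓ) := (hfs _).symm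
      _ = f i.val := hper
      _ = s i := by rw [hf_lt i.val i.isLt]


end Necklaces
end
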